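/- For each integer k ≥ 1, there exists a numerical semigroup S such that the Buchweitz set B(S) = {n ≥ 2 : |nG| > (2n-1)(|G|-1)}, where G = ℕ \ S, equals the integer interval [7+2k, 7+4k]. One such S has gapset G = [1, 43+27k+4k²] ∪ {80+51k+8k², 85+53k+8k², 86+53k+8k²}. -/

import Mathlib

set_option maxHeartbeats 1000000
open Pointwise Finset

lemma IccAddIcc (a b c d : ℕ) (hab : a ≤ b) (hcd : c ≤ d) :
    Icc a b + Icc c d = Icc (a+c) (b+d) := by
  ext x
  simp only [Finset.mem_add, mem_Icc]
  constructor
  · rintro ⟨y, hy, z, hz, rfl⟩; omega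
  · intro hx
    refine ⟨max a (x - d), ?_, x - max a (x - d), ?_, ?_⟩ <;> omega

lemma IccAddSingleton (a b x : ℕ) (hab : a ≤ b) : Icc a b + {x} = Icc (a+x) (b+x) := by
  rw [show ({x} : Finset ℕ) = Icc x x from (Icc_self x).symm, IccAddIcc a b x x hab le_rfl]

lemma biUnionAdd (s : Finset ℕ) (f : ℕ → Finset ℕ) (t : Finset ℕ) :
    (s.biUnion f) + t = s.biUnion (fun i => f i + t) := by
  ext x
  simp only [Finset.mem_add, mem_biUnion]
  constructor
  · rintro ⟨y, ⟨i, hi, hy⟩, z, hz, rfl⟩; exact ⟨i, hi, y, hy, z, hz, rfl⟩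
  · rintro ⟨i, hi, y, hy, z, hz, rfl⟩; exact ⟨y, ⟨i, hi, hy⟩, z, hz, rfl⟩

lemma IccUnionIcc (a b c d : ℕ) (h1 : a ≤ c) (h2 : c ≤ b + 1) (h3 : b ≤ d) :
    Icc a b ∪ Icc c d = Icc a d := by
  ext x; simp only [mem_union, mem_Icc]; omega

lemma cover4 (l E F A p q : ℕ) (hq : p + 1 = q) (h0 : F ≤ A) (hle : l ≤ E)
    (h1 : l + A ≤ E + F + 1) (h2 : l + A + p ≤ E + A + 1) :
    Icc (l+1) (E+(A+q)) ⊆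
      ((Icc (l+1) (E+F) ∪ Icc (l+A) (E+A)) ∪ Icc (l+(A+p)) (E+(A+p))) ∪
        Icc (l+(A+q)) (E+(A+q)) := by
  intro x hx
  simp only [mem_Icc, mem_union] at *
  omega

def Fk (k : ℕ) : ℕ := 43 + 27*k + 4*k^2
def ak (k : ℕ) : ℕ := 80 + 51*k + 8*k^2
def GG (k : ℕ) : Finset ℕ :=
  Icc 1 (Fk k) ∪ {ak k} ∪ {ak k + (2*k+5)} ∪ {ak k + (2*k+6)}
def blk (k n m : ℕ) : Finset ℕ :=
  Icc (n * ak k + m*(2*k+5)) (n * ak k + m*(2*k+6))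
def HH (k n : ℕ) : Finset ℕ :=
  Icc n (Fk k + (n-1) * (ak k + (2*k+6))) ∪ (range (n+1)).biUnion (blk k n)

lemma step (k d : ℕ) : HH k (d+1) + GG k = HH k (d+2) := by
  have hF1 : 1 ≤ Fk k := by unfold Fk; omega
  have hA1 : 80 ≤ ak k := by unfold ak; omega
  have hFA : Fk k + (37+24*k+4*k^2) = ak k := by unfold Fk ak; ring
  have h2F : 2 * Fk k = ak k + (6 + 3*k) := by unfold Fk ak; ring
  have hAge : 3*k + 6 ≤ ak k := by unfold ak; nlinarith
  have hFC : Fk k ≤ ak k := by omega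
  have hblk_le : ∀ n m : ℕ, n * ak k + m*(2*k+5) ≤ n * ak k + m*(2*k+6) := by
    intro n m
    have := Nat.mul_le_mul_left m (show 2*k+5 ≤ 2*k+6 by omega)
    omega
  have hIle : d+1 ≤ Fk k + d * (ak k + (2*k+6)) := by
    have : d * 1 ≤ d * (ak k + (2*k+6)) := Nat.mul_le_mul_left d (by omega)
    omega
  have hdA : d + 1 ≤ (d+1) * ak k := by
    calc d + 1 = (d+1) * 1 := by ring
    _ ≤ (d+1) * ak k := Nat.mul_le_mul_left _ (by omega)
  have hdC : d * 1 ≤ d * (ak k + (2*k+6)) := Nat.mul_le_mul_left d (by omega)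
  -- expand LHS
  unfold HH GG
  simp only [show d+1-1 = d from rfl, show d+2-1 = d+1 from rfl]
  rw [union_add, add_union, add_union, add_union,
    IccAddIcc _ _ _ _ hIle hF1,
    IccAddSingleton _ _ _ hIle, IccAddSingleton _ _ _ hIle, IccAddSingleton _ _ _ hIle,
    biUnionAdd]
  apply Finset.Subset.antisymm
  · apply union_subset
    · -- interval part
      apply union_subset
      apply union_subset
      apply union_subset
      · exact (Icc_subset_Icc (by omega) (by nlinarith)).trans subset_union_left
      · exact (Icc_subset_Icc (by omega) (by nlinarith)).trans subset_union_left
      · exact (Icc_subset_Icc (by omega) (by nlinarith)).trans subset_union_left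
      · exact (Icc_subset_Icc (by omega) (by nlinarith)).trans subset_union_left
    · -- blocks part
      apply biUnion_subset.2
      intro m hm
      rw [mem_range] at hm
      have hm' : m ≤ d + 1 := by omega
      rw [add_union, add_union, add_union]
      unfold blk
      rw [IccAddIcc _ _ _ _ (hblk_le _ m) hF1,
        IccAddSingleton _ _ _ (hblk_le _ m), IccAddSingleton _ _ _ (hblk_le _ m),
        IccAddSingleton _ _ _ (hblk_le _ m)]
      apply union_subset
      apply union_subset
      apply union_subset
      · -- block + Icc 1 F  ⊆ main interval
        refine (Icc_subset_Icc (by omega) ?_).trans subset_union_left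
        have h1 : m * (2*k+6) ≤ (d+1) * (2*k+6) := Nat.mul_le_mul_right _ hm'
        nlinarith
      · -- block + {A} = blk k (d+2) m
        refine le_trans (le_of_eq ?_)
          ((subset_biUnion_of_mem (blk k (d+2)) (mem_range.2 (by omega) : m ∈ range (d+3))).trans
            subset_union_right)
        unfold blk
        rw [show (d+1) * ak k + m*(2*k+5) + ak k = (d+2) * ak k + m*(2*k+5) by ring,
          show (d+1) * ak k + m*(2*k+6) + ak k = (d+2) * ak k + m*(2*k+6) by ring]
      · -- block + {A+p} ⊆ blk k (d+2) (m+1)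
        refine le_trans (Icc_subset_Icc (le_of_eq ?_) ?_)
          ((subset_biUnion_of_mem (blk k (d+2)) (mem_range.2 (by omega) : m+1 ∈ range (d+3))).trans
            subset_union_right)
        · ring
        · nlinarith
      · -- block + {A+p+1} ⊆ blk k (d+2) (m+1)
        refine le_trans (Icc_subset_Icc ?_ (le_of_eq ?_))
          ((subset_biUnion_of_mem (blk k (d+2)) (mem_range.2 (by omega) : m+1 ∈ range (d+3))).trans
            subset_union_right)
        · nlinarith
        · ring
  · apply union_subset
    · -- main interval of RHS covered
      have hc := cover4 (d+1) (Fk k + d * (ak k + (2*k+6))) (Fk k) (ak k) (2*k+5) (2*k+6)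
        rfl hFC hIle (by nlinarith) (by nlinarith)
      rw [show Fk k + (d+1) * (ak k + (2*k+6)) =
        (Fk k + d * (ak k + (2*k+6))) + (ak k + (2*k+6)) by ring]
      refine hc.trans ?_
      apply union_subset
      apply union_subset
      apply union_subset
      · intro x hx; simp only [mem_union]; tauto
      · intro x hx; simp only [mem_union]; tauto
      · intro x hx; simp only [mem_union]; tauto
      · intro x hx; simp only [mem_union]; tauto
    · -- blocks of RHS covered
      apply biUnion_subset.2
      intro m hm
      rw [mem_range] at hm
      rcases Nat.lt_or_ge m (d+2) with hm' | hm'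
      · -- m ≤ d+1 : blk (d+2) m = blk (d+1) m + {A}
        have hbm : blk k (d+2) m = blk k (d+1) m + {ak k} := by
          unfold blk
          rw [IccAddSingleton _ _ _ (hblk_le _ m),
            show (d+1) * ak k + m*(2*k+5) + ak k = (d+2) * ak k + m*(2*k+5) by ring,
            show (d+1) * ak k + m*(2*k+6) + ak k = (d+2) * ak k + m*(2*k+6) by ring]
        rw [hbm]
        refine le_trans ?_ subset_union_right
        refine le_trans ?_ (subset_biUnion_of_mem _ (mem_range.2 (by omega) : m ∈ range (d+2)))
        rw [add_union, add_union, add_union]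
        intro x hx; simp only [mem_union]; tauto
      · -- m = d+2
        have hm2 : m = d + 2 := by omega
        subst hm2
        have key : blk k (d+2) (d+2) ⊆
            (blk k (d+1) (d+1) + {ak k + (2*k+5)}) ∪ (blk k (d+1) (d+1) + {ak k + (2*k+6)}) := by
          unfold blk
          rw [IccAddSingleton _ _ _ (hblk_le _ (d+1)), IccAddSingleton _ _ _ (hblk_le _ (d+1))]
          rw [IccUnionIcc _ _ _ _ (by linarith) (by nlinarith) (by linarith)]
          apply Icc_subset_Icc (le_of_eq (by ring)) (le_of_eq (by ring))
        refine key.trans (union_subset ?_ ?_)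
        · refine le_trans ?_ subset_union_right
          refine le_trans ?_ (subset_biUnion_of_mem _ (mem_range.2 (by omega) : d+1 ∈ range (d+2)))
          rw [add_union, add_union, add_union]
          intro x hx; simp only [mem_union]; tauto
        · refine le_trans ?_ subset_union_right
          refine le_trans ?_ (subset_biUnion_of_mem _ (mem_range.2 (by omega) : d+1 ∈ range (d+2)))
          rw [add_union, add_union, add_union]
          intro x hx; simp only [mem_union]; tauto

lemma base (k : ℕ) : HH k 1 = GG k := by
  unfold HH GG blk
  have : range 2 = {0, 1} := by decide
  rw [this]
  simp only [Finset.biUnion_insert, Finset.singleton_biUnion]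
  norm_num
  rw [show Icc (ak k + (2*k+5)) (ak k + (2*k+6)) = {ak k + (2*k+5)} ∪ {ak k + (2*k+6)} by
      ext x; simp [mem_Icc]; omega]
  ext x; simp only [Finset.mem_insert, Finset.mem_union, Finset.mem_singleton]; tauto

lemma blk_card (k n m : ℕ) : (blk k n m).card = m + 1 := by
  unfold blk
  rw [Nat.card_Icc]
  have : m * (2*k+6) = m * (2*k+5) + m := by ring
  omega

lemma gauss (N : ℕ) : 2 * ∑ m ∈ range N, (m+1) = N * (N+1) := by
  induction N with
  | zero => simp
  | succ n ih => rw [Finset.sum_range_succ, Nat.mul_add, ih]; ring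

lemma hE_le (k n : ℕ) (hn : 1 ≤ n) : n ≤ Fk k + (n-1) * (ak k + (2*k+6)) + 1 := by
  obtain ⟨d, rfl⟩ : ∃ d, n = d+1 := ⟨n-1, by omega⟩
  have h1 : d * 1 ≤ d * (ak k + (2*k+6)) := Nat.mul_le_mul_left d (by unfold ak; omega)
  have h2 : 43 ≤ Fk k := by unfold Fk; omega
  simp only [Nat.add_sub_cancel]
  omega

lemma HH_card_le (k n : ℕ) :
    (HH k n).card ≤ (Fk k + (n-1) * (ak k + (2*k+6)) + 1 - n) + ∑ m ∈ range (n+1), (m+1) := by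
  unfold HH
  refine (card_union_le _ _).trans ?_
  apply add_le_add
  · rw [Nat.card_Icc]
  · refine card_biUnion_le.trans (le_of_eq (Finset.sum_congr rfl fun m _ => blk_card k n m))

lemma regime1 (k n : ℕ) (h2 : 2 ≤ n) (h5 : n ≤ 2*k+5) :
    ((HH k n).card : ℤ) ≤ (2*(n:ℤ)-1) * ((Fk k : ℤ) + 2) := by
  have hc := HH_card_le k n
  have hE := hE_le k n (by omega)
  have hg := gauss (n+1)
  have hcast : ((HH k n).card : ℤ) ≤ ((Fk k : ℤ) + (n-1) * ((ak k : ℤ) + (2*k+6)) + 1 - n)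
      + (∑ m ∈ range (n+1), (m+1) : ℕ) := by
    calc ((HH k n).card : ℤ) ≤ ((Fk k + (n-1) * (ak k + (2*k+6)) + 1 - n : ℕ) : ℤ)
        + (∑ m ∈ range (n+1), (m+1) : ℕ) := by exact_mod_cast hc
    _ = _ := by
        rw [Nat.cast_sub hE]
        push_cast [Nat.cast_sub (show 1 ≤ n by omega)]
        ring
  have hg' : 2 * ((∑ m ∈ range (n+1), (m+1) : ℕ) : ℤ) = (n+1) * (n+2) := by exact_mod_cast hg
  have hkn : (0:ℤ) ≤ ((n:ℤ)-2) * (2*k+5-n) := by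
    apply mul_nonneg <;> [skip; skip] <;> push_cast <;> omega
  unfold Fk ak at *
  push_cast at *
  nlinarith [hkn]

lemma regime2 (k n : ℕ) (hn : n = 2*k+6) :
    ((HH k n).card : ℤ) ≤ (2*(n:ℤ)-1) * ((Fk k : ℤ) + 2) := by
  subst hn
  -- refined bound: blocks 2k+5 and 2k+6 merged
  have hb : ((range (2*k+6+1)).biUnion (blk k (2*k+6))).card ≤
      (∑ m ∈ range (2*k+5), (m+1)) + (2*(2*k+5)+2) := by
    have hsplit : range (2*k+6+1) = insert (2*k+6) (insert (2*k+5) (range (2*k+5))) := by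
      rw [← Finset.range_add_one, ← Finset.range_add_one]
    rw [hsplit, Finset.biUnion_insert, Finset.biUnion_insert, ← union_assoc]
    refine (card_union_le _ _).trans ?_
    rw [add_comm]
    apply add_le_add
    · refine card_biUnion_le.trans (le_of_eq (Finset.sum_congr rfl fun m _ => blk_card ..))
    · have hsub : blk k (2*k+6) (2*k+6) ∪ blk k (2*k+6) (2*k+5) ⊆
          Icc ((2*k+6) * ak k + (2*k+5)*(2*k+5)) ((2*k+6) * ak k + (2*k+6)*(2*k+6)) := by
        apply union_subset <;> unfold blk <;>
          exact Icc_subset_Icc (by nlinarith) (by nlinarith)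
      refine (Finset.card_le_card hsub).trans ?_
      rw [Nat.card_Icc, show (2*k+6)*(2*k+6) = (2*k+5)*(2*k+5) + (4*k+11) from by ring]
      omega
  have hc : (HH k (2*k+6)).card ≤ (Fk k + (2*k+5)*(ak k+(2*k+6)) + 1 - (2*k+6))
      + ((∑ m ∈ range (2*k+5), (m+1)) + (2*(2*k+5)+2)) := by
    unfold HH
    refine (card_union_le _ _).trans ?_
    simp only [show 2*k+6-1 = 2*k+5 from by omega]
    exact add_le_add (le_of_eq (Nat.card_Icc _ _)) hb
  have hg : 2 * ∑ m ∈ range (2*k+5), (m+1) = (2*k+5) * (2*k+6) := gauss (2*k+5)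
  have hE := hE_le k (2*k+6) (by omega)
  have hE' : 2*k+6 ≤ Fk k + (2*k+5) * (ak k + (2*k+6)) + 1 := by
    simp only [show 2*k+6-1 = 2*k+5 from by omega] at hE; exact hE
  have hcast : ((HH k (2*k+6)).card : ℤ) ≤ ((Fk k:ℤ) + (2*(k:ℤ)+5)*((ak k:ℤ)+(2*k+6)) + 1 - (2*k+6))
      + ((∑ m ∈ range (2*k+5), (m+1) : ℕ) + (2*(2*(k:ℤ)+5)+2)) := by
    calc ((HH k (2*k+6)).card : ℤ)
        ≤ ((Fk k + (2*k+5)*(ak k+(2*k+6)) + 1 - (2*k+6) : ℕ) : ℤ)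
          + (((∑ m ∈ range (2*k+5), (m+1)) + (2*(2*k+5)+2) : ℕ) : ℤ) := by exact_mod_cast hc
    _ = _ := by rw [Nat.cast_sub hE']; push_cast; ring
  have hg' : 2 * ((∑ m ∈ range (2*k+5), (m+1) : ℕ) : ℤ) = (2*(k:ℤ)+5) * (2*k+6) := by
    exact_mod_cast hg
  unfold Fk ak at *
  push_cast at *
  nlinarith [hcast, hg']

lemma regime4 (k n : ℕ) (hn : 4*k+11 ≤ n) :
    ((HH k n).card : ℤ) ≤ (2*(n:ℤ)-1) * ((Fk k : ℤ) + 2) := by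
  have hsub : HH k n ⊆ Icc n (n * ak k + n*(2*k+6)) := by
    unfold HH
    apply union_subset
    · apply Icc_subset_Icc le_rfl
      obtain ⟨d, rfl⟩ : ∃ d, n = d+1 := ⟨n-1, by omega⟩
      simp only [Nat.add_sub_cancel]
      have h2 : Fk k ≤ ak k + (2*k+6) := by unfold Fk ak; omega
      nlinarith
    · apply biUnion_subset.2
      intro m hm
      rw [mem_range] at hm
      unfold blk
      apply Icc_subset_Icc
      · have : n * 1 ≤ n * ak k := Nat.mul_le_mul_left n (by unfold ak; omega)
        omega
      · have : m * (2*k+6) ≤ n * (2*k+6) := Nat.mul_le_mul_right _ (by omega)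
        omega
  have hcard : (HH k n).card ≤ n * ak k + n*(2*k+6) + 1 - n := by
    refine (Finset.card_le_card hsub).trans ?_
    rw [Nat.card_Icc]
  have hn1 : n ≤ n * ak k + n*(2*k+6) + 1 := by
    have : n * 1 ≤ n * ak k := Nat.mul_le_mul_left n (by unfold ak; omega)
    omega
  have hcast : ((HH k n).card : ℤ) ≤ (n:ℤ) * (ak k) + n*(2*k+6) + 1 - n := by
    calc ((HH k n).card : ℤ) ≤ ((n * ak k + n*(2*k+6) + 1 - n : ℕ) : ℤ) := by exact_mod_cast hcard
    _ = _ := by rw [Nat.cast_sub hn1]; push_cast; ring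
  have h1 : (0:ℤ) ≤ ((n:ℤ) - (4*k+11)) * (k+5) := by
    apply mul_nonneg <;> push_cast <;> omega
  unfold Fk ak at *
  push_cast at *
  nlinarith [h1]

lemma DisjIcc (a b c d : ℕ) (h : b < c) : Disjoint (Icc a b) (Icc c d) := by
  simp only [Finset.disjoint_left, mem_Icc]
  omega

lemma IccInsert0 (a b : ℕ) (h : a ≤ b+1) : Icc a (b+1) = insert (b+1) (Icc a b) := by
  ext x; simp only [mem_Icc, Finset.mem_insert]; omega

lemma gauss2 (a b : ℕ) (h : a ≤ b + 1) :
    2 * (∑ m ∈ Icc a b, (m+1)) + a*(a+1) = (b+1)*(b+2) := by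
  induction b with
  | zero =>
      interval_cases a <;> simp [Finset.Icc_self]
  | succ b ih =>
      rcases Nat.lt_or_ge a (b+2) with h' | h'
      · have ha : a ≤ b + 1 := by omega
        rw [IccInsert0 a b ha, Finset.sum_insert (by simp [mem_Icc])]
        have ihh := ih ha
        have hr : (b+2)*(b+3) = (b+1)*(b+2) + 2*(b+2) := by ring
        have hg : (b+1+1)*(b+1+2) = (b+2)*(b+3) := by ring
        omega
      · have ha : a = b + 2 := by omega
        subst ha
        rw [show Icc (b+2) (b+1) = ∅ from Finset.Icc_eq_empty (by omega)]
        simp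

lemma IccInsert (a b : ℕ) (h : a ≤ b+1) : Icc a (b+1) = insert (b+1) (Icc a b) := by
  ext x; simp only [mem_Icc, Finset.mem_insert]; omega

lemma biUnionUnion (s t : Finset ℕ) (f : ℕ → Finset ℕ) :
    (s ∪ t).biUnion f = s.biUnion f ∪ t.biUnion f := by
  ext x
  simp only [mem_biUnion, mem_union]
  constructor
  · rintro ⟨i, hi | hi, h⟩
    · exact Or.inl ⟨i, hi, h⟩
    · exact Or.inr ⟨i, hi, h⟩
  · rintro (⟨i, hi, h⟩ | ⟨i, hi, h⟩)
    · exact ⟨i, Or.inl hi, h⟩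
    · exact ⟨i, Or.inr hi, h⟩

lemma merge (k n j : ℕ) :
    (Icc (2*k+4) (2*k+4+j)).biUnion (blk k n) =
      Icc (n * ak k + (2*k+4)*(2*k+5)) (n * ak k + (2*k+4+j)*(2*k+6)) := by
  induction j with
  | zero => simp [blk]
  | succ j ih =>
      rw [show 2*k+4+(j+1) = (2*k+4+j)+1 from rfl, IccInsert _ _ (by omega),
        Finset.biUnion_insert, ih, union_comm]
      unfold blk
      have hh1 : n * ak k + (2*k+4)*(2*k+5) ≤ n * ak k + (2*k+4+j+1)*(2*k+5) := by
        have : (2*k+4)*(2*k+5) ≤ (2*k+4+j+1)*(2*k+5) := Nat.mul_le_mul_right _ (by omega)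
        omega
      have hh2 : n * ak k + (2*k+4+j+1)*(2*k+5) ≤ n * ak k + (2*k+4+j)*(2*k+6) + 1 := by
        have : (2*k+4+j+1)*(2*k+5) ≤ (2*k+4+j)*(2*k+6) + 1 := by nlinarith
        omega
      have hh3 : n * ak k + (2*k+4+j)*(2*k+6) ≤ n * ak k + (2*k+4+j+1)*(2*k+6) := by
        have : (2*k+4+j)*(2*k+6) ≤ (2*k+4+j+1)*(2*k+6) := Nat.mul_le_mul_right _ (by omega)
        omega
      rw [IccUnionIcc _ _ _ _ hh1 hh2 hh3]

lemma regime3 (k q : ℕ) (hq : q ≤ 2*k+3) :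
    2 * ((HH k (2*k+7+q)).card : ℤ) =
      2 * (2*(2*(k:ℤ)+7+q)-1) * ((Fk k:ℤ)+2) + 2 + ((q:ℤ)+1)*(2*(k:ℤ)-q) := by
  set n := 2*k+7+q with hn
  have hA1 : 80 ≤ ak k := by unfold ak; omega
  have hnA : n * 1 ≤ n * ak k := Nat.mul_le_mul_left n (by omega)
  -- key endpoint identity
  have hE1 : Fk k + (n-1) * (ak k + (2*k+6)) + 1 = n * ak k + q*(2*k+6) := by
    rw [show n - 1 = 2*k+6+q from by omega]
    unfold Fk ak; ring
  set E := Fk k + (n-1) * (ak k + (2*k+6)) with hE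
  -- range split
  have hsplit : range (n+1) = (Icc 0 q ∪ Icc (q+1) (2*k+3)) ∪ Icc (2*k+4) n := by
    ext x; simp only [mem_range, mem_union, mem_Icc]; omega
  -- merged top
  have hT : (Icc (2*k+4) n).biUnion (blk k n) =
      Icc (n * ak k + (2*k+4)*(2*k+5)) (n * ak k + n*(2*k+6)) := by
    rw [show n = 2*k+4+(3+q) from by omega] at *
    exact merge k _ (3+q)
  -- low blocks absorbed
  have habs : Icc n E ∪ (Icc 0 q).biUnion (blk k n) = Icc n (E+1) := by
    apply Finset.Subset.antisymm
    · apply union_subset (Icc_subset_Icc le_rfl (by omega))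
      apply biUnion_subset.2
      intro m hm
      rw [mem_Icc] at hm
      unfold blk
      apply Icc_subset_Icc
      · omega
      · have : m * (2*k+6) ≤ q * (2*k+6) := Nat.mul_le_mul_right _ hm.2
        omega
    · intro x hx
      rw [mem_Icc] at hx
      rcases Nat.lt_or_ge E x with hgt | hle
      · have hxE : x = E + 1 := by omega
        apply mem_union_right
        rw [mem_biUnion]
        refine ⟨q, by simp, ?_⟩
        unfold blk
        rw [mem_Icc]
        have : q * (2*k+5) ≤ q * (2*k+6) := Nat.mul_le_mul_left _ (by omega)
        omega
      · exact mem_union_left _ (mem_Icc.2 ⟨hx.1, hle⟩)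
  -- structure
  have hstruct : HH k n = Icc n (E+1) ∪
      ((Icc (q+1) (2*k+3)).biUnion (blk k n) ∪
        Icc (n * ak k + (2*k+4)*(2*k+5)) (n * ak k + n*(2*k+6))) := by
    unfold HH
    rw [hsplit, biUnionUnion, biUnionUnion, ← hE, ← hT, ← habs]
    ext x; simp only [mem_union]; tauto
  -- disjointness
  have hd1 : ∀ m, q+1 ≤ m → m ≤ 2*k+3 →
      n * ak k + q*(2*k+6) + 1 ≤ n * ak k + m*(2*k+5) := by
    intro m h1 h2
    have : (q+1) * (2*k+5) ≤ m * (2*k+5) := Nat.mul_le_mul_right _ h1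
    nlinarith
  have hd2 : ∀ m, m ≤ 2*k+3 → n * ak k + m*(2*k+6) + 1 ≤ n * ak k + (2*k+4)*(2*k+5) := by
    intro m h2
    have : m * (2*k+6) ≤ (2*k+3) * (2*k+6) := Nat.mul_le_mul_right _ h2
    nlinarith
  have hD1 : Disjoint (Icc n (E+1))
      ((Icc (q+1) (2*k+3)).biUnion (blk k n) ∪
        Icc (n * ak k + (2*k+4)*(2*k+5)) (n * ak k + n*(2*k+6))) := by
    rw [Finset.disjoint_union_right, Finset.disjoint_biUnion_right]
    constructor
    · intro m hm
      rw [mem_Icc] at hm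
      exact DisjIcc _ _ _ _ (by have := hd1 m hm.1 hm.2; omega)
    · refine DisjIcc _ _ _ _ ?_
      have h1 : q * (2*k+6) ≤ (2*k+3) * (2*k+6) := Nat.mul_le_mul_right _ hq
      have h2 : (2*k+3) * (2*k+6) + 1 ≤ (2*k+4)*(2*k+5) := by nlinarith
      omega
  have hD2 : Disjoint ((Icc (q+1) (2*k+3)).biUnion (blk k n))
      (Icc (n * ak k + (2*k+4)*(2*k+5)) (n * ak k + n*(2*k+6))) := by
    rw [Finset.disjoint_biUnion_left]
    intro m hm
    rw [mem_Icc] at hm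
    exact DisjIcc _ _ _ _ (by have := hd2 m hm.2; omega)
  -- card of middle blocks
  have hM : ((Icc (q+1) (2*k+3)).biUnion (blk k n)).card = ∑ m ∈ Icc (q+1) (2*k+3), (m+1) := by
    rw [Finset.card_biUnion]
    · refine Finset.sum_congr rfl fun m _ => ?_
      unfold blk
      rw [Nat.card_Icc]
      have : m * (2*k+6) = m * (2*k+5) + m := by ring
      omega
    · intro m hm m' hm' hne
      rw [Finset.mem_coe, mem_Icc] at hm hm'
      rcases Nat.lt_or_ge m m' with h | h
      · refine DisjIcc _ _ _ _ ?_
        have h1 : (m+1) * (2*k+5) ≤ m' * (2*k+5) := Nat.mul_le_mul_right _ h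
        nlinarith
      · have h' : m' < m := by omega
        refine (DisjIcc _ _ _ _ ?_).symm
        have h1 : (m'+1) * (2*k+5) ≤ m * (2*k+5) := Nat.mul_le_mul_right _ h'
        nlinarith
  have hMsum : 2 * (∑ m ∈ Icc (q+1) (2*k+3), (m+1)) + (q+1)*(q+2) = (2*k+4)*(2*k+5) :=
    gauss2 (q+1) (2*k+3) (by omega)
  -- assemble
  have hcard : (HH k n).card = (E+2-n) + ((∑ m ∈ Icc (q+1) (2*k+3), (m+1))
      + (n * ak k + n*(2*k+6) + 1 - (n * ak k + (2*k+4)*(2*k+5)))) := by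
    rw [hstruct, Finset.card_union_of_disjoint hD1, Finset.card_union_of_disjoint hD2,
      Nat.card_Icc, Nat.card_Icc, hM]
  -- cast to ℤ
  have hnE : n ≤ E + 2 := by
    have := hE1; omega
  have hTb : n * ak k + (2*k+4)*(2*k+5) ≤ n * ak k + n*(2*k+6) + 1 := by
    have : (2*k+4)*(2*k+5) ≤ n * (2*k+6) := by rw [hn]; nlinarith
    omega
  have hcast : ((HH k n).card : ℤ) = ((E:ℤ)+2-n) + ((∑ m ∈ Icc (q+1) (2*k+3), (m+1) : ℕ)
      + ((n:ℤ) * ak k + n*(2*k+6) + 1 - ((n:ℤ) * ak k + (2*k+4)*(2*k+5)))) := by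
    rw [hcard]
    push_cast [Nat.cast_sub hnE, Nat.cast_sub hTb]
    ring
  have hMsum' : 2 * ((∑ m ∈ Icc (q+1) (2*k+3), (m+1) : ℕ) : ℤ) + ((q:ℤ)+1)*((q:ℤ)+2)
      = (2*(k:ℤ)+4)*(2*(k:ℤ)+5) := by exact_mod_cast hMsum
  have hE1' : (E:ℤ) + 1 = (n:ℤ) * ak k + q*(2*(k:ℤ)+6) := by exact_mod_cast hE1
  have hnq : (n:ℤ) = 2*(k:ℤ)+7+q := by exact_mod_cast hn
  have hE2 : (E:ℤ) = (n:ℤ) * (ak k) + (q:ℤ)*(2*(k:ℤ)+6) - 1 := by linarith [hE1']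
  have hak : ((ak k : ℕ) : ℤ) = 80 + 51*(k:ℤ) + 8*(k:ℤ)^2 := by unfold ak; push_cast; ring
  rw [hcast, hE2, hnq, hak]
  unfold Fk
  push_cast at hMsum' ⊢
  linarith [hMsum']

lemma nsmul_GG (k : ℕ) : ∀ n : ℕ, 1 ≤ n → n • GG k = HH k n := by
  intro n
  induction n with
  | zero => omega
  | succ n ih =>
      intro _
      rcases Nat.eq_zero_or_pos n with rfl | hn
      · rw [show (0+1 : ℕ) = 1 from rfl, one_nsmul, base]
      · rw [succ_nsmul, ih hn]
        obtain ⟨d, rfl⟩ : ∃ d, n = d + 1 := ⟨n-1, by omega⟩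
        exact step k d

lemma cardGG (k : ℕ) : (GG k).card = Fk k + 3 := by
  have hFA : Fk k < ak k := by unfold Fk ak; omega
  unfold GG
  rw [Finset.card_union_of_disjoint (by
      rw [Finset.disjoint_singleton_right]
      simp only [mem_union, mem_Icc, Finset.mem_singleton]
      omega),
    Finset.card_union_of_disjoint (by
      rw [Finset.disjoint_singleton_right]
      simp only [mem_union, mem_Icc, Finset.mem_singleton]
      omega),
    Finset.card_union_of_disjoint (by
      rw [Finset.disjoint_singleton_right]
      simp only [mem_Icc]
      omega),
    Nat.card_Icc]
  simp

theorem stmt18 (k : ℕ) (hk : 1 ≤ k)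
    (G : Finset ℕ)
    (hG : G = Finset.Icc 1 (43 + 27 * k + 4 * k ^ 2) ∪
      {80 + 51 * k + 8 * k ^ 2, 85 + 53 * k + 8 * k ^ 2, 86 + 53 * k + 8 * k ^ 2}) :
    ∃ S : Set ℕ, (0 : ℕ) ∈ S ∧ (∀ a ∈ S, ∀ c ∈ S, a + c ∈ S) ∧ Sᶜ.Finite ∧
      Sᶜ = (↑G : Set ℕ) ∧
      {n : ℕ | 2 ≤ n ∧ (2 * n - 1) * ((G.card : ℤ) - 1) < ((n • G).card : ℤ)} =
        Set.Icc (7 + 2 * k) (7 + 4 * k) := by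
  have hGG : G = GG k := by
    rw [hG]
    unfold GG Fk ak
    ext x
    simp only [mem_union, mem_Icc, Finset.mem_insert, Finset.mem_singleton]
    omega
  refine ⟨(↑G : Set ℕ)ᶜ, ?_, ?_, ?_, ?_, ?_⟩
  · -- 0 ∈ S
    simp only [Set.mem_compl_iff, Finset.mem_coe]
    rw [hG]
    simp only [mem_union, mem_Icc, Finset.mem_insert, Finset.mem_singleton]
    omega
  · -- closure
    intro a ha c hc
    simp only [Set.mem_compl_iff, Finset.mem_coe] at *
    rw [hG] at *
    simp only [mem_union, mem_Icc, Finset.mem_insert, Finset.mem_singleton] at *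
    omega
  · rw [compl_compl]; exact G.finite_toSet
  · rw [compl_compl]
  · -- Buchweitz set
    ext n
    simp only [Set.mem_setOf_eq, Set.mem_Icc]
    have hcard : (((GG k).card : ℤ) - 1) = (Fk k : ℤ) + 2 := by
      rw [cardGG]; push_cast; ring
    constructor
    · rintro ⟨h2, hlt⟩
      rw [hGG, nsmul_GG k n (by omega), hcard] at hlt
      by_contra hcon
      rcases Nat.lt_or_ge n (2*k+6) with hr1 | hr'
      · -- n ≤ 2k+5
        have := regime1 k n h2 (by omega)
        push_cast at hlt this
        linarith
      rcases Nat.eq_or_lt_of_le hr' with hr2 | hr''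
      · have := regime2 k n hr2.symm
        push_cast at hlt this
        linarith
      rcases Nat.lt_or_ge n (4*k+11) with hr3 | hr4
      · -- 2k+7 ≤ n ≤ 4k+10
        obtain ⟨q, rfl⟩ : ∃ q, n = 2*k+7+q := ⟨n - (2*k+7), by omega⟩
        have hq : q ≤ 2*k+3 := by omega
        have h3 := regime3 k q hq
        have hq' : 2*k+1 ≤ q := by
          push_neg at hcon
          omega
        have hcast : ((2*k+7+q : ℕ) : ℤ) = 2*(k:ℤ)+7+q := by push_cast; ring
        rw [hcast] at hlt
        have hqz : (2*k+1 : ℤ) ≤ (q:ℤ) := by exact_mod_cast hq'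
        have hneg : ((q:ℤ)+1)*(2*(k:ℤ)-q) ≤ -(2*(k:ℤ)+2) := by nlinarith
        have hk' : (1:ℤ) ≤ (k:ℤ) := by exact_mod_cast hk
        linarith
      · have := regime4 k n hr4
        push_cast at hlt this
        linarith
    · rintro ⟨hl, hr⟩
      have h2 : 2 ≤ n := by omega
      refine ⟨h2, ?_⟩
      rw [hGG, nsmul_GG k n (by omega), hcard]
      obtain ⟨q, rfl⟩ : ∃ q, n = 2*k+7+q := ⟨n - (2*k+7), by omega⟩
      have hq : q ≤ 2*k+3 := by omega
      have hq2 : q ≤ 2*k := by omega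
      have h3 := regime3 k q hq
      have hcast : ((2*k+7+q : ℕ) : ℤ) = 2*(k:ℤ)+7+q := by push_cast; ring
      rw [hcast]
      have hpos : (0:ℤ) ≤ ((q:ℤ)+1)*(2*(k:ℤ)-q) := by
        apply mul_nonneg
        · positivity
        · have : (q:ℤ) ≤ 2*(k:ℤ) := by exact_mod_cast hq2
          linarith
      linarith
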